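/- In the set ℕ → ℕ with the pointwise order (f ≤ g iff f(n) ≤ g(n) for all n), there exists an increasing chain of chains (C_γ)_{γ<ω₁} of length ω₁ in IC(ℕ → ℕ, ≤) (i.e., γ < γ' < ω₁ implies C_γ ⊑ C_{γ'} and not C_{γ'} ⊑ C_γ) such that no C_γ is ⊑-below any maximal increasing chain in IC(ℕ → ℕ, ≤). -/

import Mathlib

universe u

/-- An increasing chain in a quasi-ordered set `(X, r)`: an ordinal `len` together with a
family of elements of `X` indexed by the ordinals below `len`, such that `β < γ` implies
`x_β ≺ x_γ` (i.e. `x_β ≼ x_γ` and not `x_γ ≼ x_β`). -/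
structure IncChain (X : Type u) (r : X → X → Prop) : Type (u + 1) where
  len : Ordinal.{u}
  val : (β : Ordinal.{u}) → β < len → X
  inc : ∀ (β γ : Ordinal.{u}) (hβ : β < len) (hγ : γ < len), β < γ →
    r (val β hβ) (val γ hγ) ∧ ¬ r (val γ hγ) (val β hβ)

namespace IncChain

variable {X : Type u} {r : X → X → Prop}

/-- The domination quasi-order `⊑` on increasing chains. -/
def Le (A B : IncChain X r) : Prop :=
  ∀ (β : Ordinal.{u}) (hβ : β < A.len), ∃ (γ : Ordinal.{u}) (hγ : γ < B.len),
    r (A.val β hβ) (B.val γ hγ)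

/-- The equivalence `≐` induced by `⊑`. -/
def Equiv (A B : IncChain X r) : Prop := A.Le B ∧ B.Le A

/-- `A ⊆ B`: every element of the chain `A` occurs in the chain `B`. -/
def Subset (A B : IncChain X r) : Prop :=
  ∀ (β : Ordinal.{u}) (hβ : β < A.len), ∃ (γ : Ordinal.{u}) (hγ : γ < B.len),
    B.val γ hγ = A.val β hβ

/-- `A` is cofinal in `B`. -/
def Cofinal (A B : IncChain X r) : Prop := A.Subset B ∧ B.Le A

/-- The cofinality of a chain: the least ordinal indexing a chain cofinal in it. -/
noncomputable def cof (B : IncChain X r) : Ordinal.{u} :=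
  sInf {α : Ordinal.{u} | ∃ A : IncChain X r, A.len = α ∧ A.Cofinal B}

/-- A maximal chain. -/
def Maximal (A : IncChain X r) : Prop := ∀ B : IncChain X r, A.Le B → B.Le A

end IncChain


def sd (f g : ℕ → ℕ) : Prop := ∃ N : ℕ, ∀ n, N ≤ n → f n < g n


theorem exists_sd_ub (u : ℕ → (ℕ → ℕ)) : ∃ f, ∀ i, sd (u i) f := by
  refine ⟨fun n => (Finset.range (n + 1)).sup (fun i => u i n) + 1, fun i => ⟨i, fun n hn => ?_⟩⟩
  exact Nat.lt_succ_of_le (Finset.le_sup (f := fun i => u i n) (Finset.mem_range.mpr (Nat.lt_succ_of_le hn)))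

theorem countable_Iio_of_lt_omega1 {γ : Ordinal.{1}} (h : γ < (Cardinal.aleph 1).ord) :
    (Set.Iio γ).Countable := by
  have h1 : γ.card < Cardinal.aleph 1 := Cardinal.lt_ord.mp h
  have h2 : γ.card ≤ Cardinal.aleph0 := by
    rw [← Cardinal.succ_aleph0] at h1
    exact Order.lt_succ_iff.mp h1
  rw [← Cardinal.le_aleph0_iff_set_countable, Ordinal.mk_Iio_ordinal]
  calc Cardinal.lift.{2} γ.card ≤ Cardinal.lift.{2} Cardinal.aleph0 := Cardinal.lift_le.mpr h2
    _ = Cardinal.aleph0 := Cardinal.lift_aleph0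

theorem tow_ex (γ : Ordinal.{1}) (ih : ∀ β, β < γ → ℕ → ℕ) :
    ∃ f : ℕ → ℕ, γ < (Cardinal.aleph 1).ord → ∀ β (h : β < γ), sd (ih β h) f := by
  by_cases hγ : γ < (Cardinal.aleph 1).ord
  · rcases eq_or_ne γ 0 with rfl | h0
    · exact ⟨fun _ => 0, fun _ β h => absurd h (not_lt_zero (a := β))⟩
    · have hne : (Set.Iio γ).Nonempty := ⟨0, pos_iff_ne_zero.mpr h0⟩
      obtain ⟨e, he⟩ := (countable_Iio_of_lt_omega1 hγ).exists_eq_range hne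
      have hemem : ∀ i, e i < γ := fun i => by
        have : e i ∈ Set.Iio γ := he ▸ Set.mem_range_self i
        exact this
      obtain ⟨f, hf⟩ := exists_sd_ub (fun i => ih (e i) (hemem i))
      refine ⟨f, fun _ β h => ?_⟩
      have : β ∈ Set.range e := he ▸ h
      obtain ⟨i, hi⟩ := this
      subst hi
      exact hf i
  · exact ⟨fun _ => 0, fun h => absurd h hγ⟩

noncomputable def tow : Ordinal.{1} → (ℕ → ℕ) :=
  WellFounded.fix Ordinal.lt_wf (fun γ ih => Classical.choose (tow_ex γ ih))

theorem tow_spec {β γ : Ordinal.{1}} (h : β < γ) (hγ : γ < (Cardinal.aleph 1).ord) :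
    sd (tow β) (tow γ) := by
  have heq : tow γ = Classical.choose (tow_ex γ (fun y _ => tow y)) :=
    WellFounded.fix_eq Ordinal.lt_wf _ γ
  rw [heq]
  exact Classical.choose_spec (tow_ex γ (fun y _ => tow y)) hγ β h




noncomputable def natOf (β : Ordinal.{0}) (h : β < Ordinal.omega0) : ℕ :=
  Classical.choose (Ordinal.lt_omega0.mp h)

theorem natOf_spec (β : Ordinal.{0}) (h : β < Ordinal.omega0) : β = (natOf β h : Ordinal) :=
  Classical.choose_spec (Ordinal.lt_omega0.mp h)

theorem natOf_cast (n : ℕ) (h : (n : Ordinal.{0}) < Ordinal.omega0) : natOf (n : Ordinal) h = n := by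
  have := natOf_spec (n : Ordinal) h
  exact_mod_cast this.symm

def step (f : ℕ → ℕ) (k : ℕ) : ℕ → ℕ := fun n => f n + if n < k then k else 0

theorem step_le {f : ℕ → ℕ} {k l : ℕ} (h : k ≤ l) : step f k ≤ step f l := by
  intro n
  unfold step
  by_cases h1 : n < k
  · simp [h1, lt_of_lt_of_le h1 h, h]
  · by_cases h2 : n < l <;> simp [h1, h2]

theorem step_zero_lt {f : ℕ → ℕ} {k l : ℕ} (h : k < l) : step f k 0 < step f l 0 := by
  unfold step
  have hl : 0 < l := Nat.lt_of_le_of_lt (Nat.zero_le k) h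
  rw [if_pos hl]
  by_cases h1 : (0:ℕ) < k <;> simp [h1] <;> omega

noncomputable def chainOf (f : ℕ → ℕ) : IncChain (ℕ → ℕ) (· ≤ ·) where
  len := Ordinal.omega0
  val β hβ := step f (natOf β hβ)
  inc β γ hβ hγ hlt := by
    have hk : natOf β hβ < natOf γ hγ := by
      have h1 := natOf_spec β hβ
      have h2 := natOf_spec γ hγ
      rw [h1, h2] at hlt
      exact_mod_cast hlt
    refine ⟨step_le hk.le, fun hle => ?_⟩
    exact absurd (hle 0) (not_le.mpr (step_zero_lt hk))

theorem chainOf_len (f : ℕ → ℕ) : (chainOf f).len = Ordinal.omega0 := rfl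

theorem chainOf_le {f g : ℕ → ℕ} (h : sd f g) : (chainOf f).Le (chainOf g) := by
  obtain ⟨N, hN⟩ := h
  intro β hβ
  set k := natOf β hβ with hk
  set j := k + N + (Finset.range N).sup f with hj
  refine ⟨(j : Ordinal), Ordinal.nat_lt_omega0 j, ?_⟩
  show step f k ≤ step g (natOf (j : Ordinal) (Ordinal.nat_lt_omega0 j))
  rw [natOf_cast]
  intro n
  unfold step
  by_cases hn : N ≤ n
  · have hfg := hN n hn
    by_cases h1 : n < k <;> by_cases h2 : n < j <;> simp [h1, h2] <;> omega
  · push_neg at hn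
    have hfn : f n ≤ (Finset.range N).sup f := Finset.le_sup (Finset.mem_range.mpr hn)
    have hnj : n < j := by omega
    by_cases h1 : n < k <;> simp [h1, hnj] <;> omega

theorem chainOf_not_le {f g : ℕ → ℕ} (h : sd f g) : ¬ (chainOf g).Le (chainOf f) := by
  obtain ⟨N, hN⟩ := h
  intro hle
  obtain ⟨γ, hγ, hle0⟩ := hle ((0 : ℕ) : Ordinal) (Ordinal.nat_lt_omega0 0)
  have hj : natOf γ hγ = natOf γ hγ := rfl
  have h0 : natOf ((0:ℕ) : Ordinal) (Ordinal.nat_lt_omega0 0) = 0 := natOf_cast 0 _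
  have hle0' : step g 0 ≤ step f (natOf γ hγ) := by
    have := hle0
    rwa [show (chainOf g).val ((0:ℕ):Ordinal) (Ordinal.nat_lt_omega0 0) = step g 0 from by
      show step g (natOf _ _) = step g 0; rw [h0]] at this
  have h1 := hle0' (max (natOf γ hγ) N)
  unfold step at h1
  have hnj : ¬ (max (natOf γ hγ) N < natOf γ hγ) := by omega
  have hn0 : ¬ (max (natOf γ hγ) N < 0) := by omega
  rw [if_neg hnj, if_neg hn0] at h1
  have h2 := hN (max (natOf γ hγ) N) (le_max_right _ _)
  simp only [] at h1
  revert h1 h2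
  omega



/-- monotonicity along `≤` of indices -/
theorem IncChain.mono (B : IncChain (ℕ → ℕ) (· ≤ ·)) {β γ : Ordinal.{0}}
    (hβ : β < B.len) (hγ : γ < B.len) (h : β ≤ γ) : B.val β hβ ≤ B.val γ hγ := by
  rcases lt_or_eq_of_le h with h | h
  · exact (B.inc β γ hβ hγ h).1
  · subst h; exact le_refl _

theorem no_maximal (B : IncChain (ℕ → ℕ) (· ≤ ·)) : ¬ B.Maximal := by
  intro hM
  -- B is nonempty
  rcases eq_or_ne B.len 0 with h0 | h0
  · -- empty chain is not maximal: compare with a singleton chain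
    have hB' : B.Le ⟨1, fun _ _ => (fun _ => 0), by
        intro β γ hβ hγ hlt
        exact absurd (hlt.trans_le (Ordinal.lt_one_iff_zero.mp hγ).le)
          (not_lt_zero (a := β))⟩ := by
      intro β hβ; rw [h0] at hβ; exact absurd hβ (not_lt_zero (a := β))
    obtain ⟨γ, hγ, -⟩ := hM _ hB' 0 zero_lt_one
    rw [h0] at hγ; exact absurd hγ (not_lt_zero (a := γ))
  have hβ₀ : (0 : Ordinal) < B.len := pos_iff_ne_zero.mpr h0
  -- B dominates every function
  have dom : ∀ g : ℕ → ℕ, ∃ (β : Ordinal) (hβ : β < B.len), g ≤ B.val β hβ := by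
    intro g
    have hB' : B.Le ⟨B.len, fun β hβ => B.val β hβ + g, by
        intro β γ hβ hγ hlt
        obtain ⟨h1, h2⟩ := B.inc β γ hβ hγ hlt
        constructor
        · intro n; exact Nat.add_le_add_right (h1 n) (g n)
        · intro hle
          exact h2 (fun n => Nat.le_of_add_le_add_right (hle n))⟩ := by
      intro β hβ
      exact ⟨β, hβ, fun n => Nat.le_add_right _ _⟩
    obtain ⟨γ, hγ, hle⟩ := hM _ hB' 0 hβ₀
    exact ⟨γ, hγ, fun n => le_trans (Nat.le_add_left _ _) (hle n)⟩
  by_cases hc : ∃ e : ℕ → Ordinal.{0}, (∀ k, e k < B.len) ∧ ∀ β < B.len, ∃ k, β ≤ e k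
  · -- countable cofinal sequence: diagonalize
    obtain ⟨e, he1, he2⟩ := hc
    set g : ℕ → ℕ := fun n => B.val (e n) (he1 n) n + 1 with hg
    obtain ⟨β, hβ, hgle⟩ := dom g
    obtain ⟨k, hk⟩ := he2 β hβ
    have h1 : B.val β hβ ≤ B.val (e k) (he1 k) := B.mono hβ (he1 k) hk
    have h2 := le_trans (hgle k) (h1 k)
    simp only [hg] at h2
    omega
  · -- every countable sequence below B.len is bounded strictly
    push_neg at hc
    have bdd : ∀ e : ℕ → Ordinal.{0}, (∀ k, e k < B.len) →
        ∃ (β : Ordinal) (_ : β < B.len), ∀ k, e k < β := by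
      intro e he
      obtain ⟨β, hβ, hb⟩ := hc e he
      exact ⟨β, hβ, hb⟩
    -- each coordinate's values are bounded
    have coordBdd : ∀ n : ℕ, ∃ m : ℕ, ∀ (β : Ordinal) (hβ : β < B.len), B.val β hβ n ≤ m := by
      intro n
      by_contra hcon
      push_neg at hcon
      choose e he1 he2 using hcon
      obtain ⟨β, hβ, hb⟩ := bdd e he1
      have hmono : ∀ m, B.val (e m) (he1 m) n ≤ B.val β hβ n :=
        fun m => B.mono (he1 m) hβ (hb m).le n
      have := he2 (B.val β hβ n)
      have := hmono (B.val β hβ n)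
      omega
    -- each coordinate stabilizes: find index where value is max
    have stab : ∀ n : ℕ, ∃ (β : Ordinal) (hβ : β < B.len),
        ∀ (γ : Ordinal) (hγ : γ < B.len), β ≤ γ → B.val γ hγ n = B.val β hβ n := by
      intro n
      obtain ⟨m, hm⟩ := coordBdd n
      set S : Set ℕ := {v | ∃ (β : Ordinal) (hβ : β < B.len), B.val β hβ n = v} with hS
      have hSne : S.Nonempty := ⟨B.val 0 hβ₀ n, 0, hβ₀, rfl⟩
      have hSbdd : BddAbove S := ⟨m, fun v ⟨β, hβ, hv⟩ => hv ▸ hm β hβ⟩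
      have hmax := Nat.sSup_mem hSne hSbdd
      obtain ⟨β, hβ, hv⟩ := hmax
      refine ⟨β, hβ, fun γ hγ hle => le_antisymm ?_ ?_⟩
      · rw [hv]; exact le_csSup hSbdd ⟨γ, hγ, rfl⟩
      · exact B.mono hβ hγ hle n
    choose bn hbn hstab using stab
    obtain ⟨β, hβ, hb⟩ := bdd bn hbn
    obtain ⟨γ, hγ, hg⟩ := bdd (fun _ => β) (fun _ => hβ)
    have hβγ : β < γ := hg 0
    have heq : B.val γ hγ ≤ B.val β hβ := by
      intro n
      rw [hstab n γ hγ ((hb n).le.trans hβγ.le), hstab n β hβ (hb n).le]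
    exact (B.inc β γ hβ hγ hβγ).2 heq

/-- in `(ℕ → ℕ, ≤)` with the pointwise order there is an increasing chain of
chains `(C_γ)_{γ<ω₁}` of length `ω₁` in `IC(ℕ → ℕ, ≤)` such that no `C_γ` is `⊑`-below any
maximal increasing chain. -/
theorem stmt9 :
    ∃ F : IncChain (IncChain (ℕ → ℕ) (· ≤ ·)) IncChain.Le,
      F.len = (Cardinal.aleph 1).ord ∧
      ∀ (γ : Ordinal.{1}) (hγ : γ < F.len),
        ¬ ∃ B : IncChain (ℕ → ℕ) (· ≤ ·), B.Maximal ∧ (F.val γ hγ).Le B := by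
  refine ⟨⟨(Cardinal.aleph 1).ord, fun γ _ => chainOf (tow γ), ?_⟩, rfl, ?_⟩
  · intro β γ hβ hγ hlt
    have hsd := tow_spec hlt hγ
    exact ⟨chainOf_le hsd, chainOf_not_le hsd⟩
  · rintro γ hγ ⟨B, hMax, -⟩
    exact no_maximal B hMax
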